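/- Let H be a free abelian group, Ω : H → H a group endomorphism, and G a finitely generated subgroup of H with η_Ω(G) < ∞. Then η_Ω(G) ≤ η_Ω(⟨Ω(G)⟩) + 1, where ⟨Ω(G)⟩ denotes the subgroup generated by Ω(G). (This is the abstract form of the Igusa-Todorov inequality φ(M) ≤ φ(Ω M) + 1.) -/

import Mathlib

/-- Abstract form of `φ(M) ≤ φ(ΩM) + 1`: for a finitely generated subgroup `G` of a free
abelian group `H` and an endomorphism `Ω`, `η_Ω(G) ≤ η_Ω(⟨Ω(G)⟩) + 1`. -/
theorem stmt5 (H : Type*) [AddCommGroup H] [Module.Free ℤ H] (Ω : AddMonoid.End H)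
    (G : AddSubgroup H) (hG : G.FG) (kG kΩG : ℕ)
    (hkG : IsLeast {k : ℕ | ∀ m ≥ k, Set.InjOn Ω (AddSubgroup.map (Ω ^ m) G : Set H)} kG)
    (hkΩG : IsLeast {k : ℕ | ∀ m ≥ k,
      Set.InjOn Ω (AddSubgroup.map (Ω ^ m) (AddSubgroup.map Ω G) : Set H)} kΩG) :
    kG ≤ kΩG + 1 := by
  apply hkG.2
  intro m hm
  obtain ⟨n, rfl⟩ : ∃ n, m = n + 1 := ⟨m - 1, by omega⟩
  have h := hkΩG.1 n (by omega)
  have hmap : AddSubgroup.map (Ω ^ (n + 1)) G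
      = AddSubgroup.map (Ω ^ n) (AddSubgroup.map Ω G) := by
    erw [AddSubgroup.map_map]
    congr 1
  rw [hmap]
  exact h
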